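/- (Chen's formula) For all a, b ∈ ℕ, one has in K_∞: ζ_A(a)·ζ_A(b) = ζ_A(a,b) + ζ_A(b,a) + ζ_A(a+b) + Σ_{i+j=a+b, i,j ≥ 1, (q−1)∣j} Δ^{i,j}_{a,b}·ζ_A(i,j). -/

import Mathlib

open Polynomial

noncomputable def monicOf (Fq : Type) [Field Fq] (i : ℕ) (c : Fin i → Fq) : Fq[X] :=
  X ^ i + ∑ j : Fin i, C (c j) * X ^ (j : ℕ)

/-- The truncated power sum `S_{<d}(𝔞) = ∑_{i<d} S_i(𝔞)`. -/
noncomputable def Slt (Fq : Type) [Field Fq] [Fintype Fq] : List ℕ → ℕ → RatFunc Fq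
  | [], _ => 1
  | a :: rest, d =>
      ∑ i ∈ Finset.range d, ∑ c : Fin i → Fq,
        ((algebraMap Fq[X] (RatFunc Fq) (monicOf Fq i c))⁻¹) ^ a * Slt Fq rest i

/-- Thakur's power sum `S_d(𝔞)`. -/
noncomputable def Sd (Fq : Type) [Field Fq] [Fintype Fq] (l : List ℕ) (d : ℕ) : RatFunc Fq :=
  Slt Fq l (d + 1) - Slt Fq l d

/-- The canonical inclusion of `K = Fq(θ)` into its completion `K_∞` at the infinite place. -/
noncomputable def toInfty (Fq : Type) [Field Fq] [Fintype Fq] [DecidableEq (RatFunc Fq)] :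
    RatFunc Fq →+* RatFunc.CompletionAtInfty Fq :=
  letI := RatFunc.inftyValued Fq
  UniformSpace.Completion.coeRingHom

/-- Thakur's multiple zeta value `ζ_A(𝔞) = ∑_{d=0}^∞ S_d(𝔞) ∈ K_∞`. -/
noncomputable def zetaA (Fq : Type) [Field Fq] [Fintype Fq] [DecidableEq (RatFunc Fq)]
    (l : List ℕ) : RatFunc.CompletionAtInfty Fq :=
  ∑' d : ℕ, toInfty Fq (Sd Fq l d)

/-- `Δ^{i,j}_{a,b} ∈ 𝔽_p`. -/
def Del (p : ℕ) (a b i j : ℕ) : ZMod p :=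
  (-1 : ZMod p) ^ (a - 1) * ((j - 1).choose (a - 1) : ZMod p) +
    (-1 : ZMod p) ^ (b - 1) * ((j - 1).choose (b - 1) : ZMod p)

instance ratFuncCharP (Fq : Type) [Field Fq] (p : ℕ) [CharP Fq p] :
    CharP (RatFunc Fq) p :=
  charP_of_injective_algebraMap (algebraMap Fq (RatFunc Fq)).injective p

instance fqtInftyCharP (Fq : Type) [Field Fq] [Fintype Fq] [DecidableEq (RatFunc Fq)]
    (p : ℕ) [CharP Fq p] : CharP (RatFunc.CompletionAtInfty Fq) p :=
  charP_of_injective_ringHom (toInfty Fq).injective p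


namespace ChenAux

open Finset Polynomial

variable {Fq : Type} [Field Fq] [Fintype Fq] [DecidableEq Fq]

/-- `am` is the canonical map `Fq[X] → Fq(X)`. -/
noncomputable def am : Fq[X] →+* RatFunc Fq := (algebraMap Fq[X] (RatFunc Fq) : Fq[X] →+* RatFunc Fq)

/-- The polynomial with coefficients `e : Fin i → Fq`. -/
noncomputable def polyOf (i : ℕ) (e : Fin i → Fq) : Fq[X] := ∑ j : Fin i, C (e j) * X ^ (j : ℕ)

lemma degree_polyOf (i : ℕ) (e : Fin i → Fq) : (polyOf i e).degree < (i : ℕ) := by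
  refine lt_of_le_of_lt (degree_sum_le _ _) ?_
  rw [Finset.sup_lt_iff (by exact_mod_cast WithBot.bot_lt_coe i)]
  intro j _
  exact lt_of_le_of_lt (degree_C_mul_X_pow_le _ _) (by exact_mod_cast j.isLt)

lemma coeff_polyOf (i : ℕ) (e : Fin i → Fq) (j : Fin i) : (polyOf i e).coeff j = e j := by
  rw [polyOf, finset_sum_coeff]
  have h : ∀ j' : Fin i, (C (e j') * X ^ (j' : ℕ)).coeff j = if j' = j then e j' else 0 := by
    intro j'
    rw [coeff_C_mul, coeff_X_pow]
    by_cases h : j' = j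
    · subst h; simp
    · rw [if_neg h, if_neg (by simpa [Fin.ext_iff, eq_comm] using h), mul_zero]
  simp_rw [h]
  simp

lemma polyOf_ne_zero {i : ℕ} {e : Fin i → Fq} (he : e ≠ 0) : polyOf i e ≠ 0 := by
  obtain ⟨j, hj⟩ := Function.ne_iff.mp he
  intro h0
  apply hj
  have h := coeff_polyOf i e j
  rw [h0] at h
  simpa using h.symm

lemma monicOf_eq (i : ℕ) (c : Fin i → Fq) : monicOf Fq i c = X ^ i + polyOf i c := rfl

lemma polyOf_sub (i : ℕ) (c c' : Fin i → Fq) :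
    polyOf i (c - c') = polyOf i c - polyOf i c' := by
  have h : ∀ j : Fin i, C ((c - c') j) * X ^ (j : ℕ)
      = C (c j) * X ^ (j : ℕ) - C (c' j) * X ^ (j : ℕ) := by
    intro j; simp [sub_mul]
  rw [polyOf]
  simp_rw [h]
  rw [Finset.sum_sub_distrib]
  rfl

lemma monicOf_sub (i : ℕ) (c c' : Fin i → Fq) :
    monicOf Fq i c - monicOf Fq i c' = polyOf i (c - c') := by
  rw [monicOf_eq, monicOf_eq, polyOf_sub]; ring

lemma monic_monicOf (i : ℕ) (c : Fin i → Fq) : (monicOf Fq i c).Monic := by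
  rw [monicOf_eq]
  exact (monic_X_pow i).add_of_left (by simpa using degree_polyOf i c)

lemma monicOf_ne_zero (i : ℕ) (c : Fin i → Fq) : monicOf Fq i c ≠ 0 :=
  (monic_monicOf i c).ne_zero

lemma degree_monicOf (i : ℕ) (c : Fin i → Fq) : (monicOf Fq i c).degree = i := by
  rw [monicOf_eq]
  rw [degree_add_eq_left_of_degree_lt (by simpa using degree_polyOf i c), degree_X_pow]

lemma natDegree_monicOf (i : ℕ) (c : Fin i → Fq) : (monicOf Fq i c).natDegree = i :=
  natDegree_eq_of_degree_eq_some (degree_monicOf i c)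

lemma polyOf_snoc (i : ℕ) (e' : Fin i → Fq) (a : Fq) :
    polyOf (i + 1) (Fin.snoc e' a) = C a * X ^ i + polyOf i e' := by
  rw [polyOf, Fin.sum_univ_castSucc]
  simp only [Fin.snoc_castSucc, Fin.snoc_last, Fin.coe_castSucc, Fin.val_last]
  rw [add_comm, polyOf]

lemma polyOf_smul (i : ℕ) (a : Fq) (c : Fin i → Fq) :
    polyOf i (a • c) = C a * polyOf i c := by
  rw [polyOf, polyOf, Finset.mul_sum]
  refine Finset.sum_congr rfl fun j _ => ?_
  simp [mul_assoc]

lemma sum_units_erase (g : Fq → RatFunc Fq) :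
    ∑ u : Fqˣ, g (u : Fq) = ∑ x ∈ Finset.univ.erase (0 : Fq), g x := by
  refine Finset.sum_bij' (fun u _ => (u : Fq))
    (fun x hx => Units.mk0 x (Finset.mem_erase.mp hx).1) ?_ ?_ ?_ ?_ ?_ <;>
    simp [Units.ne_zero]

lemma strata (i : ℕ) (M : Fq[X] → RatFunc Fq) :
    ∑ e : Fin i → Fq, M (polyOf i e) =
      M 0 + ∑ k ∈ Finset.range i, ∑ u : Fqˣ, ∑ c : Fin k → Fq,
        M (C (u : Fq) * monicOf Fq k c) := by
  induction i with
  | zero => simp [polyOf]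
  | succ i ih =>
    have h1 : ∑ e : Fin (i + 1) → Fq, M (polyOf (i + 1) e)
        = ∑ p : Fq × (Fin i → Fq), M (polyOf (i + 1) (Fin.snoc p.2 p.1)) := by
      exact (Fintype.sum_equiv (Fin.snocEquiv (fun _ => Fq)) _ _ fun p => rfl).symm
    rw [h1, Fintype.sum_prod_type]
    simp_rw [polyOf_snoc]
    rw [← Finset.add_sum_erase _ _ (Finset.mem_univ (0 : Fq))]
    have h0 : ∑ e' : Fin i → Fq, M (C (0 : Fq) * X ^ i + polyOf i e')
        = M 0 + ∑ k ∈ Finset.range i, ∑ u : Fqˣ, ∑ c : Fin k → Fq,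
            M (C (u : Fq) * monicOf Fq k c) := by
      simp only [map_zero, zero_mul, zero_add]
      exact ih
    have h2 : ∑ a ∈ Finset.univ.erase (0 : Fq), ∑ e' : Fin i → Fq,
        M (C a * X ^ i + polyOf i e')
        = ∑ u : Fqˣ, ∑ c : Fin i → Fq, M (C (u : Fq) * monicOf Fq i c) := by
      rw [← sum_units_erase (fun a => ∑ e' : Fin i → Fq, M (C a * X ^ i + polyOf i e'))]
      refine Finset.sum_congr rfl fun u _ => ?_
      have hbij : ∑ e' : Fin i → Fq, M (C (u : Fq) * X ^ i + polyOf i e')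
          = ∑ c : Fin i → Fq, M (C (u : Fq) * X ^ i + polyOf i (u • c)) :=
        (Fintype.sum_equiv (MulAction.toPerm u) _ _ fun c => rfl).symm
      rw [hbij]
      refine Finset.sum_congr rfl fun c _ => ?_
      congr 1
      rw [monicOf_eq, mul_add]
      congr 1
      have huc : u • c = ((u : Fq) • c) := rfl
      rw [huc, polyOf_smul]
    rw [h0, h2, Finset.sum_range_succ]
    ring

section PartialFractions

variable {E : Type} [Field E]

lemma hockey (a t : ℕ) (ha : 1 ≤ a) :
    ∑ m ∈ Finset.Ico a (a + t), (m - 1).choose (a - 1) = (a + t - 1).choose a := by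
  rcases Nat.eq_zero_or_pos t with rfl | ht
  · rw [Nat.add_zero, Finset.Ico_self, Finset.sum_empty,
      Nat.choose_eq_zero_of_lt (by omega : a - 1 < a)]
  · have h1 : ∑ m ∈ Finset.Ico a (a + t), (m - 1).choose (a - 1)
        = ∑ r ∈ Finset.Icc (a - 1) (a + t - 2), r.choose (a - 1) := by
      refine Finset.sum_nbij' (fun m => m - 1) (fun r => r + 1) ?_ ?_ ?_ ?_ ?_ <;>
        intros x hx <;> simp only [Finset.mem_Ico, Finset.mem_Icc] at * <;> omega
    rw [h1, Nat.sum_Icc_choose]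
    congr 1 <;> omega

lemma double_swap (a B : ℕ) (F : ℕ → ℕ → E) :
    ∑ m ∈ Finset.Ico a B, ∑ n ∈ Finset.Icc 1 (B - m), F m (m + n)
      = ∑ s ∈ Finset.Icc (a + 1) B, ∑ m ∈ Finset.Ico a s, F m s := by
  have inner : ∀ m, m < B → ∑ n ∈ Finset.Icc 1 (B - m), F m (m + n)
      = ∑ s ∈ Finset.Ico (m + 1) (B + 1), F m s := by
    intro m hmB
    refine Finset.sum_nbij' (fun n => m + n) (fun s => s - m) ?_ ?_ ?_ ?_ ?_ <;>
      intro x hx <;> simp only [Finset.mem_Ico, Finset.mem_Icc] at * <;> omega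
  rw [Finset.sum_congr rfl (fun m hm => inner m (Finset.mem_Ico.mp hm).2)]
  have ext1 : ∑ m ∈ Finset.Ico a B, ∑ s ∈ Finset.Ico (m + 1) (B + 1), F m s
      = ∑ m ∈ Finset.Ico a (B + 1), ∑ s ∈ Finset.Ico (m + 1) (B + 1), F m s := by
    rcases le_or_gt a B with hab | hab
    · rw [Finset.sum_Ico_succ_top (by omega : a ≤ B), Finset.Ico_self, Finset.sum_empty,
        add_zero]
    · rw [Finset.Ico_eq_empty (by omega), Finset.Ico_eq_empty (by omega)]
  rw [ext1, Finset.sum_Ico_Ico_comm']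
  rw [show Finset.Icc (a + 1) B = Finset.Ico (a + 1) (B + 1) from (Finset.Ico_add_one_right_eq_Icc _ _).symm]
  rcases le_or_gt a B with hab | hab
  · rw [Finset.sum_eq_sum_Ico_succ_bot (by omega : a < B + 1), Finset.Ico_self,
      Finset.sum_empty, zero_add]
  · rw [Finset.Ico_eq_empty (show ¬ a < B + 1 by omega),
      Finset.Ico_eq_empty (show ¬ a + 1 < B + 1 by omega)]

lemma inv_mul_inv_aux {x y : E} (hx : x ≠ 0) (hy : y ≠ 0) (h : y - x ≠ 0) :
    x⁻¹ * y⁻¹ = (y - x)⁻¹ * x⁻¹ - (y - x)⁻¹ * y⁻¹ := by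
  field_simp

lemma pf_one (x y : E) (hx : x ≠ 0) (hy : y ≠ 0) (h : y - x ≠ 0) (j : ℕ) :
    x⁻¹ * (y⁻¹) ^ j = ((y - x)⁻¹) ^ j * x⁻¹
      - ∑ m ∈ Finset.Icc 1 j, ((y - x)⁻¹) ^ m * (y⁻¹) ^ (j + 1 - m) := by
  induction j with
  | zero => simp
  | succ j ih =>
    have h1 : x⁻¹ * y⁻¹ ^ (j + 1) = (x⁻¹ * y⁻¹ ^ j) * y⁻¹ := by ring
    rw [h1, ih, sub_mul, Finset.sum_mul]
    have h2 : ((y - x)⁻¹) ^ j * x⁻¹ * y⁻¹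
        = ((y - x)⁻¹) ^ (j + 1) * x⁻¹ - ((y - x)⁻¹) ^ (j + 1) * y⁻¹ := by
      calc ((y - x)⁻¹) ^ j * x⁻¹ * y⁻¹ = ((y - x)⁻¹) ^ j * (x⁻¹ * y⁻¹) := by ring
      _ = ((y - x)⁻¹) ^ j * ((y - x)⁻¹ * x⁻¹ - (y - x)⁻¹ * y⁻¹) := by
            rw [inv_mul_inv_aux hx hy h]
      _ = ((y - x)⁻¹) ^ (j + 1) * x⁻¹ - ((y - x)⁻¹) ^ (j + 1) * y⁻¹ := by ring
    rw [h2, Finset.sum_Icc_succ_top (by omega : 1 ≤ j + 1)]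
    have h3 : ∀ m ∈ Finset.Icc 1 j,
        ((y - x)⁻¹) ^ m * (y⁻¹) ^ (j + 1 - m) * y⁻¹
          = ((y - x)⁻¹) ^ m * (y⁻¹) ^ (j + 1 + 1 - m) := by
      intro m hm
      simp only [Finset.mem_Icc] at hm
      rw [mul_assoc, ← pow_succ, show j + 1 - m + 1 = j + 1 + 1 - m by omega]
    rw [Finset.sum_congr rfl h3]
    rw [show j + 1 + 1 - (j + 1) = 1 by omega, pow_one]
    ring

lemma pf (b : ℕ) (hb : 1 ≤ b) (x y : E) (hx : x ≠ 0) (hy : y ≠ 0) (h : y - x ≠ 0)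
    (a : ℕ) (ha : 1 ≤ a) :
    (x⁻¹) ^ a * (y⁻¹) ^ b
      = (∑ m ∈ Finset.Ico b (a + b), (-1 : E) ^ (m + b) * (((m - 1).choose (b - 1) : ℕ) : E)
            * ((y - x)⁻¹) ^ m * (x⁻¹) ^ (a + b - m))
        + ∑ m ∈ Finset.Ico a (a + b), (-1 : E) ^ a * (((m - 1).choose (a - 1) : ℕ) : E)
            * ((y - x)⁻¹) ^ m * (y⁻¹) ^ (a + b - m) := by
  induction a, ha using Nat.le_induction with
  | base =>
    have e1 : Finset.Ico b (1 + b) = {b} := by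
      rw [add_comm, Finset.Ico_add_one_right_eq_Icc, Finset.Icc_self]
    have e4 : Finset.Ico 1 (1 + b) = Finset.Icc 1 b := by
      rw [add_comm, Finset.Ico_add_one_right_eq_Icc]
    rw [e1, Finset.sum_singleton, e4]
    have e5 : ∀ m ∈ Finset.Icc 1 b,
        (-1 : E) ^ 1 * (((m - 1).choose (1 - 1) : ℕ) : E) * ((y - x)⁻¹) ^ m
            * (y⁻¹) ^ (1 + b - m)
          = -(((y - x)⁻¹) ^ m * (y⁻¹) ^ (b + 1 - m)) := by
      intro m hm
      simp only [Finset.mem_Icc] at hm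
      rw [show (1 : ℕ) - 1 = 0 from rfl, Nat.choose_zero_right,
        show 1 + b - m = b + 1 - m by omega]
      push_cast
      ring
    rw [Finset.sum_congr rfl e5, Finset.sum_neg_distrib]
    have e2 : (-1 : E) ^ (b + b) = 1 := by
      rw [← two_mul, pow_mul]
      norm_num
    rw [e2, Nat.choose_self, show 1 + b - b = 1 by omega, pow_one]
    rw [pf_one x y hx hy h b]
    push_cast
    ring
  | succ a ha ih =>
    simp only [Nat.add_sub_cancel]
    have hmul : (x⁻¹ : E) ^ (a + 1) * y⁻¹ ^ b = x⁻¹ * (x⁻¹ ^ a * y⁻¹ ^ b) := by ring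
    rw [hmul, ih, mul_add, Finset.mul_sum, Finset.mul_sum]
    have hS1 : ∀ m ∈ Finset.Ico b (a + b),
        x⁻¹ * ((-1 : E) ^ (m + b) * (((m - 1).choose (b - 1) : ℕ) : E) * (y - x)⁻¹ ^ m
            * x⁻¹ ^ (a + b - m))
          = (-1 : E) ^ (m + b) * (((m - 1).choose (b - 1) : ℕ) : E) * (y - x)⁻¹ ^ m
            * x⁻¹ ^ (a + 1 + b - m) := by
      intro m hm
      simp only [Finset.mem_Ico] at hm
      rw [show a + 1 + b - m = (a + b - m) + 1 by omega, pow_succ]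
      ring
    rw [Finset.sum_congr rfl hS1]
    have hS2 : ∀ m ∈ Finset.Ico a (a + b),
        x⁻¹ * ((-1 : E) ^ a * (((m - 1).choose (a - 1) : ℕ) : E) * (y - x)⁻¹ ^ m
            * y⁻¹ ^ (a + b - m))
          = (-1 : E) ^ a * (((m - 1).choose (a - 1) : ℕ) : E) * (y - x)⁻¹ ^ (a + b) * x⁻¹
            - ∑ n ∈ Finset.Icc 1 (a + b - m),
                (-1 : E) ^ a * (((m - 1).choose (a - 1) : ℕ) : E) * (y - x)⁻¹ ^ (m + n)
                  * y⁻¹ ^ (a + b + 1 - (m + n)) := by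
      intro m hm
      simp only [Finset.mem_Ico] at hm
      have hpf := pf_one x y hx hy h (a + b - m)
      calc x⁻¹ * ((-1 : E) ^ a * (((m - 1).choose (a - 1) : ℕ) : E) * (y - x)⁻¹ ^ m
            * y⁻¹ ^ (a + b - m))
          = (-1 : E) ^ a * (((m - 1).choose (a - 1) : ℕ) : E) * (y - x)⁻¹ ^ m
            * (x⁻¹ * y⁻¹ ^ (a + b - m)) := by ring
        _ = _ := by
            rw [hpf, mul_sub, Finset.mul_sum]
            congr 1
            · have hz : ((y - x)⁻¹ : E) ^ m * (y - x)⁻¹ ^ (a + b - m) = (y - x)⁻¹ ^ (a + b) := by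
                rw [← pow_add]
                congr 1
                omega
              calc (-1 : E) ^ a * (((m - 1).choose (a - 1) : ℕ) : E) * (y - x)⁻¹ ^ m
                    * ((y - x)⁻¹ ^ (a + b - m) * x⁻¹)
                  = ((y - x)⁻¹ ^ m * (y - x)⁻¹ ^ (a + b - m))
                      * ((-1 : E) ^ a * (((m - 1).choose (a - 1) : ℕ) : E) * x⁻¹) := by ring
                _ = _ := by rw [hz]; ring
            · refine Finset.sum_congr rfl fun n hn => ?_
              simp only [Finset.mem_Icc] at hn
              rw [pow_add, show a + b - m + 1 - n = a + b + 1 - (m + n) by omega]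
              ring
    rw [Finset.sum_congr rfl hS2, Finset.sum_sub_distrib]
    have hP : ∑ m ∈ Finset.Ico a (a + b),
        (-1 : E) ^ a * (((m - 1).choose (a - 1) : ℕ) : E) * (y - x)⁻¹ ^ (a + b) * x⁻¹
          = (-1 : E) ^ a * (((a + b - 1).choose a : ℕ) : E) * (y - x)⁻¹ ^ (a + b) * x⁻¹ := by
      have hh := hockey a b ha
      calc ∑ m ∈ Finset.Ico a (a + b),
          (-1 : E) ^ a * (((m - 1).choose (a - 1) : ℕ) : E) * (y - x)⁻¹ ^ (a + b) * x⁻¹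
          = ((∑ m ∈ Finset.Ico a (a + b), (m - 1).choose (a - 1) : ℕ) : E)
              * ((-1 : E) ^ a * (y - x)⁻¹ ^ (a + b) * x⁻¹) := by
            rw [Nat.cast_sum, Finset.sum_mul]
            exact Finset.sum_congr rfl fun m _ => by ring
        _ = _ := by rw [hh]; ring
    rw [hP]
    rw [double_swap a (a + b) (fun m s => (-1 : E) ^ a * (((m - 1).choose (a - 1) : ℕ) : E)
      * (y - x)⁻¹ ^ s * y⁻¹ ^ (a + b + 1 - s))]
    have hR : ∀ s ∈ Finset.Icc (a + 1) (a + b),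
        ∑ m ∈ Finset.Ico a s, (-1 : E) ^ a * (((m - 1).choose (a - 1) : ℕ) : E)
            * (y - x)⁻¹ ^ s * y⁻¹ ^ (a + b + 1 - s)
          = (-1 : E) ^ a * (((s - 1).choose a : ℕ) : E) * (y - x)⁻¹ ^ s
              * y⁻¹ ^ (a + b + 1 - s) := by
      intro s hs
      simp only [Finset.mem_Icc] at hs
      have hh := hockey a (s - a) ha
      rw [show a + (s - a) = s by omega] at hh
      calc ∑ m ∈ Finset.Ico a s, (-1 : E) ^ a * (((m - 1).choose (a - 1) : ℕ) : E)
            * (y - x)⁻¹ ^ s * y⁻¹ ^ (a + b + 1 - s)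
          = ((∑ m ∈ Finset.Ico a s, (m - 1).choose (a - 1) : ℕ) : E)
              * ((-1 : E) ^ a * (y - x)⁻¹ ^ s * y⁻¹ ^ (a + b + 1 - s)) := by
            rw [Nat.cast_sum, Finset.sum_mul]
            exact Finset.sum_congr rfl fun m _ => by ring
        _ = _ := by rw [hh]; ring
    rw [Finset.sum_congr rfl hR]
    rw [show Finset.Ico b (a + 1 + b) = Finset.Ico b ((a + b) + 1) from by congr 1; omega,
      Finset.sum_Ico_succ_top (by omega : b ≤ a + b)]
    rw [show a + 1 + b - (a + b) = 1 by omega, pow_one]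
    have hsign : (-1 : E) ^ (a + b + b) = (-1) ^ a := by
      rw [show a + b + b = a + 2 * b by ring, pow_add, pow_mul]
      norm_num
    have hcs : (a + b - 1).choose (b - 1) = (a + b - 1).choose a := by
      rw [show b - 1 = a + b - 1 - a by omega, Nat.choose_symm (by omega : a ≤ a + b - 1)]
    rw [hsign, hcs]
    rw [show Finset.Ico (a + 1) (a + 1 + b) = Finset.Icc (a + 1) (a + b) from by
      rw [show a + 1 + b = (a + b) + 1 by omega, Finset.Ico_add_one_right_eq_Icc]]
    have hT2 : ∀ m ∈ Finset.Icc (a + 1) (a + b),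
        (-1 : E) ^ (a + 1) * (((m - 1).choose a : ℕ) : E) * (y - x)⁻¹ ^ m
            * y⁻¹ ^ (a + 1 + b - m)
          = -((-1 : E) ^ a * (((m - 1).choose a : ℕ) : E) * (y - x)⁻¹ ^ m
              * y⁻¹ ^ (a + b + 1 - m)) := by
      intro m hm
      simp only [Finset.mem_Icc] at hm
      rw [pow_succ, show a + 1 + b - m = a + b + 1 - m by omega]
      ring
    rw [Finset.sum_congr rfl hT2, Finset.sum_neg_distrib]
    ring

end PartialFractions

section Level

variable {Fq : Type} [Field Fq] [Fintype Fq] [DecidableEq Fq]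

lemma Slt_nil (d : ℕ) : Slt Fq [] d = 1 := rfl

lemma Slt_cons (n : ℕ) (rest : List ℕ) (d : ℕ) :
    Slt Fq (n :: rest) d = ∑ i ∈ Finset.range d, ∑ c : Fin i → Fq,
      ((algebraMap Fq[X] (RatFunc Fq) (monicOf Fq i c))⁻¹) ^ n * Slt Fq rest i := rfl

lemma Slt_zero (n : ℕ) (rest : List ℕ) : Slt Fq (n :: rest) 0 = 0 := by
  rw [Slt_cons]
  simp

lemma Sd_cons (n : ℕ) (rest : List ℕ) (d : ℕ) :
    Sd Fq (n :: rest) d = ∑ c : Fin d → Fq,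
      ((algebraMap Fq[X] (RatFunc Fq) (monicOf Fq d c))⁻¹) ^ n * Slt Fq rest d := by
  rw [Sd, Slt_cons, Slt_cons, Finset.sum_range_succ]
  ring

lemma Sd_single (n d : ℕ) :
    Sd Fq [n] d
      = ∑ c : Fin d → Fq, ((algebraMap Fq[X] (RatFunc Fq) (monicOf Fq d c))⁻¹) ^ n := by
  rw [Sd_cons]
  simp [Slt_nil]

lemma Sd_pair (n m d : ℕ) :
    Sd Fq [n, m] d
      = (∑ c : Fin d → Fq, ((algebraMap Fq[X] (RatFunc Fq) (monicOf Fq d c))⁻¹) ^ n)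
          * Slt Fq [m] d := by
  rw [Sd_cons, Finset.sum_mul]

lemma Slt_partial (l : List ℕ) (n : ℕ) (hl : l ≠ []) :
    ∑ d ∈ Finset.range n, Sd Fq l d = Slt Fq l n := by
  simp only [Sd]
  rw [Finset.sum_range_sub (fun d => Slt Fq l d)]
  cases l with
  | nil => simp at hl
  | cons a rest => rw [Slt_zero, sub_zero]

lemma sum_units_inv_pow (m : ℕ) :
    ∑ u : Fqˣ, ((u : Fq)⁻¹) ^ m
      = if (Fintype.card Fq - 1) ∣ m then (-1 : Fq) else 0 := by
  rw [← FiniteField.sum_pow_units Fq m]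
  exact Fintype.sum_equiv (Equiv.inv Fqˣ) _ _ (fun u => by simp)

lemma sum_polyOf (i m : ℕ) (hm : m ≠ 0) :
    ∑ e : Fin i → Fq, ((algebraMap Fq[X] (RatFunc Fq) (polyOf i e))⁻¹) ^ m
      = algebraMap Fq (RatFunc Fq) (if (Fintype.card Fq - 1) ∣ m then (-1 : Fq) else 0)
        * Slt Fq [m] i := by
  rw [strata i (fun g => ((algebraMap Fq[X] (RatFunc Fq) g)⁻¹) ^ m)]
  rw [map_zero, inv_zero, zero_pow hm, zero_add]
  rw [Slt_cons, Finset.mul_sum]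
  refine Finset.sum_congr rfl fun k _ => ?_
  calc ∑ u : Fqˣ, ∑ c : Fin k → Fq,
        ((algebraMap Fq[X] (RatFunc Fq) (C (u : Fq) * monicOf Fq k c))⁻¹) ^ m
      = ∑ u : Fqˣ, ∑ c : Fin k → Fq,
          (RatFunc.C (((u : Fq))⁻¹)) ^ m
            * ((algebraMap Fq[X] (RatFunc Fq) (monicOf Fq k c))⁻¹) ^ m := by
        refine Finset.sum_congr rfl fun u _ => Finset.sum_congr rfl fun c _ => ?_
        rw [map_mul, mul_inv, mul_pow, RatFunc.algebraMap_C, ← map_inv₀]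
    _ = (∑ u : Fqˣ, (RatFunc.C (((u : Fq))⁻¹)) ^ m)
          * (∑ c : Fin k → Fq, ((algebraMap Fq[X] (RatFunc Fq) (monicOf Fq k c))⁻¹) ^ m) := by
        rw [Finset.sum_mul_sum]
    _ = algebraMap Fq (RatFunc Fq) (if (Fintype.card Fq - 1) ∣ m then (-1 : Fq) else 0)
        * ∑ c : Fin k → Fq,
            ((algebraMap Fq[X] (RatFunc Fq) (monicOf Fq k c))⁻¹) ^ m * Slt Fq [] k := by
        congr 1
        · rw [RatFunc.algebraMap_eq_C, ← sum_units_inv_pow, map_sum]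
          exact Finset.sum_congr rfl fun u _ => by rw [map_pow]
        · exact Finset.sum_congr rfl fun c _ => by rw [Slt_nil, mul_one]

end Level

section ChenLevel

variable {Fq : Type} [Field Fq] [Fintype Fq] [DecidableEq Fq]

/-- `Am d c = 1/(monicOf d c)` in `Fq(θ)`. -/
noncomputable def Am (Fq : Type) [Field Fq] (d : ℕ) (c : Fin d → Fq) : RatFunc Fq :=
  (algebraMap Fq[X] (RatFunc Fq) (monicOf Fq d c))⁻¹

/-- `Hm d c c' = monicOf d c' - monicOf d c` in `Fq(θ)`. -/
noncomputable def Hm (Fq : Type) [Field Fq] (d : ℕ) (c c' : Fin d → Fq) : RatFunc Fq :=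
  algebraMap Fq[X] (RatFunc Fq) (monicOf Fq d c')
    - algebraMap Fq[X] (RatFunc Fq) (monicOf Fq d c)

/-- `Um d m = ∑_{h ≠ 0, deg h < d} 1/h^m`. -/
noncomputable def Um (Fq : Type) [Field Fq] [Fintype Fq] (d m : ℕ) : RatFunc Fq :=
  algebraMap Fq (RatFunc Fq) (if (Fintype.card Fq - 1) ∣ m then (-1 : Fq) else 0)
    * Slt Fq [m] d

lemma polyOf_zero (i : ℕ) : polyOf i (0 : Fin i → Fq) = 0 := by simp [polyOf]

lemma am_monicOf_ne (d : ℕ) (c : Fin d → Fq) :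
    algebraMap Fq[X] (RatFunc Fq) (monicOf Fq d c) ≠ 0 :=
  (map_ne_zero_iff _ (IsFractionRing.injective Fq[X] (RatFunc Fq))).mpr (monicOf_ne_zero d c)

lemma Hm_eq (d : ℕ) (c c' : Fin d → Fq) :
    Hm Fq d c c' = algebraMap Fq[X] (RatFunc Fq) (polyOf d (c' - c)) := by
  rw [Hm, ← map_sub, monicOf_sub]

lemma Hm_ne (d : ℕ) {c c' : Fin d → Fq} (h : c' ≠ c) : Hm Fq d c c' ≠ 0 := by
  rw [Hm_eq]
  exact (map_ne_zero_iff _ (IsFractionRing.injective Fq[X] (RatFunc Fq))).mpr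
    (polyOf_ne_zero (sub_ne_zero.mpr h))

lemma Hm_swap (d : ℕ) (c c' : Fin d → Fq) : Hm Fq d c' c = -Hm Fq d c c' := by
  rw [Hm, Hm]
  ring

lemma Sd_single' (n d : ℕ) : Sd Fq [n] d = ∑ c : Fin d → Fq, Am Fq d c ^ n :=
  Sd_single n d

lemma Sd_pair' (n m d : ℕ) :
    Sd Fq [n, m] d = (∑ c : Fin d → Fq, Am Fq d c ^ n) * Slt Fq [m] d :=
  Sd_pair n m d

lemma keyU (d : ℕ) {m : ℕ} (hm : m ≠ 0) (c : Fin d → Fq) :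
    ∑ c' ∈ Finset.univ.erase c, ((Hm Fq d c c')⁻¹) ^ m = Um Fq d m := by
  have h1 : ∑ c' ∈ Finset.univ.erase c, ((Hm Fq d c c')⁻¹) ^ m
      = ∑ e ∈ Finset.univ.erase (0 : Fin d → Fq),
          ((algebraMap Fq[X] (RatFunc Fq) (polyOf d e))⁻¹) ^ m := by
    refine Finset.sum_nbij' (fun c' => c' - c) (fun e => e + c) ?_ ?_ ?_ ?_ ?_
    · intro x hx
      simp only [Finset.mem_erase, Finset.mem_univ, and_true] at *
      exact sub_ne_zero.mpr hx
    · intro x hx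
      simp only [Finset.mem_erase, Finset.mem_univ, and_true] at *
      intro h0
      apply hx
      have := congrArg (fun y => y - c) h0
      simpa using this
    · intro x _
      simp
    · intro x _
      simp
    · intro x _
      rw [Hm_eq]
  rw [h1]
  have h2 : ∑ e : Fin d → Fq, ((algebraMap Fq[X] (RatFunc Fq) (polyOf d e))⁻¹) ^ m
      = ((algebraMap Fq[X] (RatFunc Fq) (polyOf d (0 : Fin d → Fq)))⁻¹) ^ m
        + ∑ e ∈ Finset.univ.erase (0 : Fin d → Fq),
            ((algebraMap Fq[X] (RatFunc Fq) (polyOf d e))⁻¹) ^ m :=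
    (Finset.add_sum_erase _ _ (Finset.mem_univ _)).symm
  rw [polyOf_zero, map_zero, inv_zero, zero_pow hm, zero_add] at h2
  rw [← h2, sum_polyOf d m hm, Um]

lemma keyU2 (d : ℕ) {m : ℕ} (hm : m ≠ 0) (c : Fin d → Fq) :
    ∑ c' ∈ Finset.univ.erase c, ((Hm Fq d c' c)⁻¹) ^ m = (-1 : RatFunc Fq) ^ m * Um Fq d m := by
  rw [← keyU d hm c, Finset.mul_sum]
  refine Finset.sum_congr rfl fun c' _ => ?_
  rw [Hm_swap, inv_neg, neg_pow]

lemma offdiag_swap {ι M : Type} [Fintype ι] [DecidableEq ι] [AddCommMonoid M]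
    (G : ι → ι → M) :
    ∑ c : ι, ∑ c' ∈ Finset.univ.erase c, G c c'
      = ∑ c : ι, ∑ c' ∈ Finset.univ.erase c, G c' c := by
  rw [Finset.sum_sigma', Finset.sum_sigma']
  refine Finset.sum_nbij' (fun p => ⟨p.2, p.1⟩) (fun p => ⟨p.2, p.1⟩) ?_ ?_ ?_ ?_ ?_
  · rintro ⟨u, v⟩ hp
    simp only [Finset.mem_sigma, Finset.mem_univ, Finset.mem_erase, true_and, and_true] at *
    exact hp.symm
  · rintro ⟨u, v⟩ hp
    simp only [Finset.mem_sigma, Finset.mem_univ, Finset.mem_erase, true_and, and_true] at *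
    exact hp.symm
  · rintro ⟨u, v⟩ _
    rfl
  · rintro ⟨u, v⟩ _
    rfl
  · rintro ⟨u, v⟩ _
    rfl

end ChenLevel

section ChenLevelMain

variable {Fq : Type} [Field Fq] [Fintype Fq] [DecidableEq Fq]

lemma neg_one_pow_dvd (p : ℕ) [Fact p.Prime] [CharP Fq p] {m : ℕ}
    (hdvd : (Fintype.card Fq - 1) ∣ m) : ((-1 : RatFunc Fq)) ^ m = 1 := by
  rcases eq_or_ne p 2 with rfl | hp2
  · haveI : CharP (RatFunc Fq) 2 := ratFuncCharP Fq 2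
    rw [CharTwo.neg_eq (1 : RatFunc Fq), one_pow]
  · have hpodd : Odd p := (Fact.out : p.Prime).odd_of_ne_two hp2
    obtain ⟨n, hnp, hcard⟩ := FiniteField.card Fq p
    have hodd : Odd (Fintype.card Fq) := by
      rw [hcard]
      exact hpodd.pow
    have heven : Even m := by
      obtain ⟨k, hk⟩ := hdvd
      obtain ⟨t, ht⟩ := hodd
      have h1 : 1 ≤ Fintype.card Fq := Fintype.card_pos
      have h2 : Fintype.card Fq - 1 = 2 * t := by omega
      rw [h2] at hk
      exact ⟨t * k, by rw [hk]; ring⟩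
    exact heven.neg_one_pow

lemma del_coeff (p : ℕ) [Fact p.Prime] [CharP Fq p] (a b m : ℕ) (ha : 0 < a) (hb : 0 < b)
    (hdvd : (Fintype.card Fq - 1) ∣ m) (i : ℕ) :
    (ZMod.castHom (dvd_refl p) (RatFunc Fq)) (Del p a b i m)
      = -((-1 : RatFunc Fq) ^ (m + b) * (((m - 1).choose (b - 1) : ℕ) : RatFunc Fq))
        + -((-1 : RatFunc Fq) ^ (a + m) * (((m - 1).choose (a - 1) : ℕ) : RatFunc Fq)) := by
  rw [Del, map_add, map_mul, map_mul, map_pow, map_pow, map_neg, map_one, map_natCast,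
    map_natCast]
  have h1 := neg_one_pow_dvd (Fq := Fq) p hdvd
  have ea : (-1 : RatFunc Fq) ^ (a - 1) * (-1) = (-1) ^ a := by
    rw [← pow_succ, show a - 1 + 1 = a by omega]
  have eb : (-1 : RatFunc Fq) ^ (b - 1) * (-1) = (-1) ^ b := by
    rw [← pow_succ, show b - 1 + 1 = b by omega]
  rw [pow_add, pow_add, h1, one_mul, mul_one]
  linear_combination (-(((m - 1).choose (a - 1) : ℕ) : RatFunc Fq)) * ea
    + (-(((m - 1).choose (b - 1) : ℕ) : RatFunc Fq)) * eb

lemma chen_level (p : ℕ) [Fact p.Prime] [CharP Fq p] (a b : ℕ) (ha : 0 < a) (hb : 0 < b)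
    (d : ℕ) :
    Sd Fq [a] d * Sd Fq [b] d
      = Sd Fq [a + b] d
        + ∑ j ∈ Finset.Ioo 0 (a + b),
            if (Fintype.card Fq - 1) ∣ j then
              ZMod.castHom (dvd_refl p) (RatFunc Fq) (Del p a b (a + b - j) j)
                * Sd Fq [a + b - j, j] d
            else 0 := by
  rw [Sd_single' a d, Sd_single' b d, Finset.sum_mul_sum]
  have hsplit : ∀ c : Fin d → Fq,
      ∑ c' : Fin d → Fq, Am Fq d c ^ a * Am Fq d c' ^ b
        = Am Fq d c ^ (a + b)
          + ∑ c' ∈ Finset.univ.erase c, Am Fq d c ^ a * Am Fq d c' ^ b := by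
    intro c
    rw [← Finset.add_sum_erase _ _ (Finset.mem_univ c), pow_add]
  rw [Finset.sum_congr rfl fun c _ => hsplit c, Finset.sum_add_distrib, ← Sd_single' (a + b) d]
  congr 1
  have hpf : ∀ c : Fin d → Fq, ∀ c' ∈ Finset.univ.erase c,
      Am Fq d c ^ a * Am Fq d c' ^ b
        = (∑ m ∈ Finset.Ico b (a + b), (-1 : RatFunc Fq) ^ (m + b)
              * (((m - 1).choose (b - 1) : ℕ) : RatFunc Fq) * ((Hm Fq d c c')⁻¹) ^ m
              * Am Fq d c ^ (a + b - m))
          + ∑ m ∈ Finset.Ico a (a + b), (-1 : RatFunc Fq) ^ a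
              * (((m - 1).choose (a - 1) : ℕ) : RatFunc Fq) * ((Hm Fq d c c')⁻¹) ^ m
              * Am Fq d c' ^ (a + b - m) := by
    intro c c' hc'
    have hne : c' ≠ c := (Finset.mem_erase.mp hc').1
    exact pf b hb _ _ (am_monicOf_ne d c) (am_monicOf_ne d c') (Hm_ne d hne) a ha
  rw [Finset.sum_congr rfl fun c _ => Finset.sum_congr rfl (hpf c)]
  simp only [Finset.sum_add_distrib]
  have hOD1 : ∑ c : Fin d → Fq, ∑ c' ∈ Finset.univ.erase c,
      ∑ m ∈ Finset.Ico b (a + b), (-1 : RatFunc Fq) ^ (m + b)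
        * (((m - 1).choose (b - 1) : ℕ) : RatFunc Fq) * ((Hm Fq d c c')⁻¹) ^ m
        * Am Fq d c ^ (a + b - m)
      = ∑ m ∈ Finset.Ico b (a + b), (-1 : RatFunc Fq) ^ (m + b)
          * (((m - 1).choose (b - 1) : ℕ) : RatFunc Fq)
          * (∑ c : Fin d → Fq, Am Fq d c ^ (a + b - m)) * Um Fq d m := by
    rw [Finset.sum_congr rfl fun (c : Fin d → Fq) _ =>
      (Finset.sum_comm (s := Finset.univ.erase c) (t := Finset.Ico b (a + b))
        (f := fun c' m => (-1 : RatFunc Fq) ^ (m + b)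
          * (((m - 1).choose (b - 1) : ℕ) : RatFunc Fq) * ((Hm Fq d c c')⁻¹) ^ m
          * Am Fq d c ^ (a + b - m)))]
    rw [Finset.sum_comm]
    refine Finset.sum_congr rfl fun m hm => ?_
    simp only [Finset.mem_Ico] at hm
    have hm0 : m ≠ 0 := by omega
    have step1 : ∀ c : Fin d → Fq,
        ∑ c' ∈ Finset.univ.erase c, (-1 : RatFunc Fq) ^ (m + b)
            * (((m - 1).choose (b - 1) : ℕ) : RatFunc Fq) * ((Hm Fq d c c')⁻¹) ^ m
            * Am Fq d c ^ (a + b - m)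
          = ((-1 : RatFunc Fq) ^ (m + b) * (((m - 1).choose (b - 1) : ℕ) : RatFunc Fq)
              * Am Fq d c ^ (a + b - m)) * Um Fq d m := by
      intro c
      calc ∑ c' ∈ Finset.univ.erase c, (-1 : RatFunc Fq) ^ (m + b)
            * (((m - 1).choose (b - 1) : ℕ) : RatFunc Fq) * ((Hm Fq d c c')⁻¹) ^ m
            * Am Fq d c ^ (a + b - m)
          = ∑ c' ∈ Finset.univ.erase c, ((-1 : RatFunc Fq) ^ (m + b)
              * (((m - 1).choose (b - 1) : ℕ) : RatFunc Fq) * Am Fq d c ^ (a + b - m))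
              * ((Hm Fq d c c')⁻¹) ^ m :=
            Finset.sum_congr rfl fun c' _ => by ring
        _ = _ := by rw [← Finset.mul_sum, keyU d hm0 c]
    rw [Finset.sum_congr rfl fun c _ => step1 c, ← Finset.sum_mul, ← Finset.mul_sum]
  have hOD2 : ∑ c : Fin d → Fq, ∑ c' ∈ Finset.univ.erase c,
      ∑ m ∈ Finset.Ico a (a + b), (-1 : RatFunc Fq) ^ a
        * (((m - 1).choose (a - 1) : ℕ) : RatFunc Fq) * ((Hm Fq d c c')⁻¹) ^ m
        * Am Fq d c' ^ (a + b - m)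
      = ∑ m ∈ Finset.Ico a (a + b), (-1 : RatFunc Fq) ^ (a + m)
          * (((m - 1).choose (a - 1) : ℕ) : RatFunc Fq)
          * (∑ c : Fin d → Fq, Am Fq d c ^ (a + b - m)) * Um Fq d m := by
    refine (offdiag_swap (fun c c' => ∑ m ∈ Finset.Ico a (a + b), (-1 : RatFunc Fq) ^ a
        * (((m - 1).choose (a - 1) : ℕ) : RatFunc Fq) * ((Hm Fq d c c')⁻¹) ^ m
        * Am Fq d c' ^ (a + b - m))).trans ?_
    rw [Finset.sum_congr rfl fun (c : Fin d → Fq) _ =>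
      (Finset.sum_comm (s := Finset.univ.erase c) (t := Finset.Ico a (a + b))
        (f := fun c' m => (-1 : RatFunc Fq) ^ a
          * (((m - 1).choose (a - 1) : ℕ) : RatFunc Fq) * ((Hm Fq d c' c)⁻¹) ^ m
          * Am Fq d c ^ (a + b - m)))]
    rw [Finset.sum_comm]
    refine Finset.sum_congr rfl fun m hm => ?_
    simp only [Finset.mem_Ico] at hm
    have hm0 : m ≠ 0 := by omega
    have step1 : ∀ c : Fin d → Fq,
        ∑ c' ∈ Finset.univ.erase c, (-1 : RatFunc Fq) ^ a
            * (((m - 1).choose (a - 1) : ℕ) : RatFunc Fq) * ((Hm Fq d c' c)⁻¹) ^ m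
            * Am Fq d c ^ (a + b - m)
          = ((-1 : RatFunc Fq) ^ a * (((m - 1).choose (a - 1) : ℕ) : RatFunc Fq)
              * Am Fq d c ^ (a + b - m)) * ((-1 : RatFunc Fq) ^ m * Um Fq d m) := by
      intro c
      calc ∑ c' ∈ Finset.univ.erase c, (-1 : RatFunc Fq) ^ a
            * (((m - 1).choose (a - 1) : ℕ) : RatFunc Fq) * ((Hm Fq d c' c)⁻¹) ^ m
            * Am Fq d c ^ (a + b - m)
          = ∑ c' ∈ Finset.univ.erase c, ((-1 : RatFunc Fq) ^ a
              * (((m - 1).choose (a - 1) : ℕ) : RatFunc Fq) * Am Fq d c ^ (a + b - m))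
              * ((Hm Fq d c' c)⁻¹) ^ m :=
            Finset.sum_congr rfl fun c' _ => by ring
        _ = _ := by rw [← Finset.mul_sum, keyU2 d hm0 c]
    rw [Finset.sum_congr rfl fun c _ => step1 c, ← Finset.sum_mul, ← Finset.mul_sum, pow_add]
    ring
  rw [hOD1, hOD2]
  have ext1 : ∑ m ∈ Finset.Ico b (a + b), (-1 : RatFunc Fq) ^ (m + b)
        * (((m - 1).choose (b - 1) : ℕ) : RatFunc Fq)
        * (∑ c : Fin d → Fq, Am Fq d c ^ (a + b - m)) * Um Fq d m
      = ∑ m ∈ Finset.Ioo 0 (a + b), (-1 : RatFunc Fq) ^ (m + b)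
        * (((m - 1).choose (b - 1) : ℕ) : RatFunc Fq)
        * (∑ c : Fin d → Fq, Am Fq d c ^ (a + b - m)) * Um Fq d m := by
    refine Finset.sum_subset ?_ ?_
    · intro x hx
      simp only [Finset.mem_Ico, Finset.mem_Ioo] at *
      omega
    · intro x hx hnx
      simp only [Finset.mem_Ico, Finset.mem_Ioo] at *
      rw [Nat.choose_eq_zero_of_lt (by omega : x - 1 < b - 1)]
      simp
  have ext2 : ∑ m ∈ Finset.Ico a (a + b), (-1 : RatFunc Fq) ^ (a + m)
        * (((m - 1).choose (a - 1) : ℕ) : RatFunc Fq)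
        * (∑ c : Fin d → Fq, Am Fq d c ^ (a + b - m)) * Um Fq d m
      = ∑ m ∈ Finset.Ioo 0 (a + b), (-1 : RatFunc Fq) ^ (a + m)
        * (((m - 1).choose (a - 1) : ℕ) : RatFunc Fq)
        * (∑ c : Fin d → Fq, Am Fq d c ^ (a + b - m)) * Um Fq d m := by
    refine Finset.sum_subset ?_ ?_
    · intro x hx
      simp only [Finset.mem_Ico, Finset.mem_Ioo] at *
      omega
    · intro x hx hnx
      simp only [Finset.mem_Ico, Finset.mem_Ioo] at *
      rw [Nat.choose_eq_zero_of_lt (by omega : x - 1 < a - 1)]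
      simp
  rw [ext1, ext2, ← Finset.sum_add_distrib]
  refine Finset.sum_congr rfl fun j hj => ?_
  simp only [Finset.mem_Ioo] at hj
  by_cases hdvd : (Fintype.card Fq - 1) ∣ j
  · rw [if_pos hdvd, Sd_pair', del_coeff p a b j ha hb hdvd (a + b - j)]
    have hUm : Um Fq d j = -(Slt Fq [j] d) := by
      rw [Um, if_pos hdvd, map_neg, map_one]
      ring
    rw [hUm]
    ring
  · rw [if_neg hdvd]
    have hUm : Um Fq d j = 0 := by
      rw [Um, if_neg hdvd, map_zero, zero_mul]
    rw [hUm]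
    ring

end ChenLevelMain

section Topology

open Filter FunctionField

variable {Fq : Type} [Field Fq] [Fintype Fq] [DecidableEq Fq] [DecidableEq (RatFunc Fq)]

instance : CompleteSpace (RatFunc.CompletionAtInfty Fq) := by
  letI := RatFunc.inftyValued Fq
  exact @UniformSpace.Completion.completeSpace (RatFunc Fq) _

lemma coe_ofAdd_le {z w : ℤ} (h : z ≤ w) :
    ((Multiplicative.ofAdd z : Multiplicative ℤ) : WithZero (Multiplicative ℤ))
      ≤ ((Multiplicative.ofAdd w : Multiplicative ℤ) : WithZero (Multiplicative ℤ)) :=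
  WithZero.coe_le_coe.mpr (Multiplicative.ofAdd_le.mpr h)

lemma coe_ofAdd_le_one {z : ℤ} (hz : z ≤ 0) :
    ((Multiplicative.ofAdd z : Multiplicative ℤ) : WithZero (Multiplicative ℤ)) ≤ 1 := by
  have h := coe_ofAdd_le hz
  simpa using h

lemma val_inv_monic (k : ℕ) (c : Fin k → Fq) :
    RatFunc.inftyValuation Fq ((algebraMap Fq[X] (RatFunc Fq) (monicOf Fq k c))⁻¹)
      = ((Multiplicative.ofAdd (-(k : ℤ)) : Multiplicative ℤ)
          : WithZero (Multiplicative ℤ)) := by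
  rw [map_inv₀, RatFunc.inftyValuation_apply,
    RatFunc.inftyValuation.polynomial Fq (monicOf_ne_zero k c), natDegree_monicOf,
    ← WithZero.exp_neg]
  rfl

lemma val_Slt_le (l : List ℕ) (i : ℕ) :
    RatFunc.inftyValuation Fq (Slt Fq l i) ≤ 1 := by
  induction l generalizing i with
  | nil => rw [Slt_nil, map_one]
  | cons n rest ih =>
    rw [Slt_cons]
    refine Valuation.map_sum_le _ fun k _ => Valuation.map_sum_le _ fun c _ => ?_
    rw [map_mul, map_pow]
    refine mul_le_one' (pow_le_one' ?_ n) (ih k)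
    rw [val_inv_monic]
    exact coe_ofAdd_le_one (by omega)

lemma val_Sd_le (n : ℕ) (hn : 0 < n) (rest : List ℕ) (d : ℕ) :
    RatFunc.inftyValuation Fq (Sd Fq (n :: rest) d)
      ≤ ((Multiplicative.ofAdd (-(d : ℤ)) : Multiplicative ℤ)
          : WithZero (Multiplicative ℤ)) := by
  rw [Sd_cons]
  refine Valuation.map_sum_le _ fun c _ => ?_
  rw [map_mul, map_pow, val_inv_monic]
  calc ((Multiplicative.ofAdd (-(d : ℤ)) : Multiplicative ℤ)
          : WithZero (Multiplicative ℤ)) ^ n * RatFunc.inftyValuation Fq (Slt Fq rest d)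
      ≤ ((Multiplicative.ofAdd (-(d : ℤ)) : Multiplicative ℤ)
          : WithZero (Multiplicative ℤ)) ^ n * 1 := mul_le_mul_right (val_Slt_le rest d) _
    _ = ((Multiplicative.ofAdd (-(d : ℤ)) : Multiplicative ℤ)
          : WithZero (Multiplicative ℤ)) ^ n := mul_one _
    _ ≤ ((Multiplicative.ofAdd (-(d : ℤ)) : Multiplicative ℤ)
          : WithZero (Multiplicative ℤ)) := by
        rw [← WithZero.coe_pow]
        refine WithZero.coe_le_coe.mpr ?_
        rw [← ofAdd_nsmul]
        refine Multiplicative.ofAdd_le.mpr ?_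
        simp only [nsmul_eq_mul]
        have h1 : (1 : ℤ) ≤ (n : ℤ) := by exact_mod_cast hn
        have h2 : (0 : ℤ) ≤ (d : ℤ) := Int.ofNat_nonneg d
        nlinarith

lemma val_toInfty (x : RatFunc Fq) :
    Valued.v (toInfty Fq x) = RatFunc.inftyValuation Fq x := by
  letI := RatFunc.inftyValued Fq
  exact Valued.valuedCompletion_apply x

lemma hasSum_of_val_le {f : ℕ → RatFunc Fq}
    (hf : ∀ d, RatFunc.inftyValuation Fq (f d)
      ≤ ((Multiplicative.ofAdd (-(d : ℤ)) : Multiplicative ℤ)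
          : WithZero (Multiplicative ℤ))) :
    ∃ L : RatFunc.CompletionAtInfty Fq, HasSum (fun d => toInfty Fq (f d)) L ∧
      Filter.Tendsto (fun N => toInfty Fq (∑ d ∈ Finset.range N, f d))
        Filter.atTop (nhds L) := by
  set g : ℕ → RatFunc.CompletionAtInfty Fq :=
    fun N => toInfty Fq (∑ d ∈ Finset.range N, f d) with hg
  -- basic bound: for M ≤ M', v (g M' - g M) ≤ ofAdd (-M)
  have hdiff : ∀ M M' : ℕ, M ≤ M' →
      Valued.v (g M' - g M)
        ≤ ((Multiplicative.ofAdd (-(M : ℤ)) : Multiplicative ℤ)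
            : WithZero (Multiplicative ℤ)) := by
    intro M M' hMM
    have h1 : g M' - g M = toInfty Fq (∑ d ∈ Finset.Ico M M', f d) := by
      rw [hg]
      rw [← map_sub, Finset.sum_Ico_eq_sub _ hMM]
    rw [h1, val_toInfty]
    refine Valuation.map_sum_le _ fun d hd => ?_
    simp only [Finset.mem_Ico] at hd
    exact le_trans (hf d) (coe_ofAdd_le (by omega))
  -- Cauchy
  have hcauchy : CauchySeq g := by
    rw [(Valued.hasBasis_uniformity (RatFunc.CompletionAtInfty Fq)
      (WithZero (Multiplicative ℤ))).cauchySeq_iff]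
    intro γ _
    simp only [Set.mem_setOf_eq, Valuation.restrict_lt_iff_lt_embedding]
    have hγ : (MonoidWithZeroHom.ValueGroup₀.embedding γ.1 : WithZero (Multiplicative ℤ)) ≠ 0 := by
      simp
    generalize MonoidWithZeroHom.ValueGroup₀.embedding γ.1 = γ at hγ ⊢
    obtain ⟨z, hz⟩ := WithZero.ne_zero_iff_exists.mp hγ
    set N : ℕ := (1 - Multiplicative.toAdd z).toNat with hN
    refine ⟨N, fun m hm n hn => ?_⟩
    have key : ∀ M M' : ℕ, N ≤ M → M ≤ M' →
        Valued.v (g M' - g M) < (γ : WithZero (Multiplicative ℤ)) := by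
      intro M M' h1 h2
      refine lt_of_le_of_lt (hdiff M M' h2) ?_
      rw [← hz]
      refine WithZero.coe_lt_coe.mpr ?_
      refine Multiplicative.ofAdd_lt.mpr ?_  -- need: -(M:ℤ) < toAdd z
      have h3 : -(M : ℤ) < Multiplicative.toAdd z := by
        have := hN
        omega
      exact h3
    rcases le_total m n with hmn | hmn
    · exact key m n hm hmn
    · have h := key n m hn hmn
      rwa [← Valuation.map_neg, neg_sub] at h
  obtain ⟨L, hL⟩ := cauchySeq_tendsto_of_complete hcauchy
  refine ⟨L, ?_, hL⟩
  -- HasSum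
  rw [HasSum]
  intro s hs
  rw [Filter.mem_map]
  rw [Valued.mem_nhds] at hs
  obtain ⟨γu, hγsub⟩ := hs
  simp only [Valuation.restrict_lt_iff_lt_embedding] at hγsub
  have hγ : (MonoidWithZeroHom.ValueGroup₀.embedding γu.1 : WithZero (Multiplicative ℤ)) ≠ 0 := by
    simp
  generalize hγe : MonoidWithZeroHom.ValueGroup₀.embedding γu.1 = γ at hγ hγsub
  obtain ⟨z, hz⟩ := WithZero.ne_zero_iff_exists.mp hγ
  set N0 : ℕ := (1 - Multiplicative.toAdd z).toNat with hN0
  have hsmall : ((Multiplicative.ofAdd (-(N0 : ℤ)) : Multiplicative ℤ)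
      : WithZero (Multiplicative ℤ)) < (γ : WithZero (Multiplicative ℤ)) := by
    rw [← hz]
    refine WithZero.coe_lt_coe.mpr ?_
    refine Multiplicative.ofAdd_lt.mpr ?_
    have h3 : -(N0 : ℤ) < Multiplicative.toAdd z := by
      have := hN0
      omega
    exact h3
  -- choose N ≥ N0 with v (g N - L) < γ
  have hev : ∀ᶠ M in atTop, Valued.v (g M - L) < (γ : WithZero (Multiplicative ℤ)) := by
    have : {y : RatFunc.CompletionAtInfty Fq |
        Valued.v (y - L) < (γ : WithZero (Multiplicative ℤ))} ∈ nhds L := by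
      rw [Valued.mem_nhds]
      exact ⟨γu, fun y hy => by simpa [Valuation.restrict_lt_iff_lt_embedding, hγe] using hy⟩
    exact hL.eventually this
  obtain ⟨N1, hN1⟩ := eventually_atTop.mp hev
  set N : ℕ := max N0 N1 with hNdef
  have hgN : Valued.v (g N - L) < (γ : WithZero (Multiplicative ℤ)) :=
    hN1 N (le_max_right _ _)
  refine mem_of_superset (Filter.mem_atTop (Finset.range N)) ?_
  intro t ht
  refine hγsub ?_
  show Valued.v ((∑ d ∈ t, toInfty Fq (f d)) - L) < (γ : WithZero (Multiplicative ℤ))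
  have hsplit : (∑ d ∈ t, toInfty Fq (f d)) - L
      = (∑ d ∈ t \ Finset.range N, toInfty Fq (f d)) + (g N - L) := by
    have h1 : ∑ d ∈ t, toInfty Fq (f d)
        = ∑ d ∈ t \ Finset.range N, toInfty Fq (f d) + ∑ d ∈ Finset.range N, toInfty Fq (f d) :=
      (Finset.sum_sdiff ht).symm
    have h2 : g N = ∑ d ∈ Finset.range N, toInfty Fq (f d) := by
      simp only [hg]
      rw [map_sum]
    rw [h1, h2]
    ring
  rw [hsplit]
  refine Valuation.map_add_lt _ ?_ hgN
  refine Valuation.map_sum_lt _ hγ fun d hd => ?_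
  simp only [Finset.mem_sdiff, Finset.mem_range, not_lt] at hd
  rw [val_toInfty]
  refine lt_of_le_of_lt (le_trans (hf d) (coe_ofAdd_le (by omega : -(d:ℤ) ≤ -(N0:ℤ)))) hsmall

end Topology

section ProductN

variable {Fq : Type} [Field Fq] [Fintype Fq] [DecidableEq Fq]

lemma Slt_succ (l : List ℕ) (N : ℕ) : Slt Fq l (N + 1) = Slt Fq l N + Sd Fq l N := by
  rw [Sd]
  ring

lemma Sd_mul_Slt (n m N : ℕ) : Sd Fq [n, m] N = Sd Fq [n] N * Slt Fq [m] N := by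
  rw [Sd_pair', Sd_single']

lemma slt_product (p : ℕ) [Fact p.Prime] [CharP Fq p] (a b : ℕ) (ha : 0 < a) (hb : 0 < b)
    (N : ℕ) :
    Slt Fq [a] N * Slt Fq [b] N
      = Slt Fq [a, b] N + Slt Fq [b, a] N + Slt Fq [a + b] N
        + ∑ j ∈ Finset.Ioo 0 (a + b),
            if (Fintype.card Fq - 1) ∣ j then
              ZMod.castHom (dvd_refl p) (RatFunc Fq) (Del p a b (a + b - j) j)
                * Slt Fq [a + b - j, j] N
            else 0 := by
  induction N with
  | zero => simp [Slt_zero]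
  | succ N ih =>
    have e6 : ∑ j ∈ Finset.Ioo 0 (a + b),
        (if (Fintype.card Fq - 1) ∣ j then
          ZMod.castHom (dvd_refl p) (RatFunc Fq) (Del p a b (a + b - j) j)
            * Slt Fq [a + b - j, j] (N + 1) else 0)
        = (∑ j ∈ Finset.Ioo 0 (a + b), if (Fintype.card Fq - 1) ∣ j then
            ZMod.castHom (dvd_refl p) (RatFunc Fq) (Del p a b (a + b - j) j)
              * Slt Fq [a + b - j, j] N else 0)
          + ∑ j ∈ Finset.Ioo 0 (a + b), if (Fintype.card Fq - 1) ∣ j then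
              ZMod.castHom (dvd_refl p) (RatFunc Fq) (Del p a b (a + b - j) j)
                * Sd Fq [a + b - j, j] N else 0 := by
      rw [← Finset.sum_add_distrib]
      refine Finset.sum_congr rfl fun j _ => ?_
      by_cases hdvd : (Fintype.card Fq - 1) ∣ j
      · simp only [if_pos hdvd, Slt_succ]
        ring
      · simp only [if_neg hdvd, add_zero]
    rw [Slt_succ [a], Slt_succ [b], Slt_succ [a, b], Slt_succ [b, a], Slt_succ [a + b], e6]
    have hchen := chen_level (Fq := Fq) p a b ha hb N
    have hab := Sd_mul_Slt (Fq := Fq) a b N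
    have hba := Sd_mul_Slt (Fq := Fq) b a N
    calc (Slt Fq [a] N + Sd Fq [a] N) * (Slt Fq [b] N + Sd Fq [b] N)
        = Slt Fq [a] N * Slt Fq [b] N
          + (Sd Fq [a] N * Slt Fq [b] N + Sd Fq [b] N * Slt Fq [a] N
            + Sd Fq [a] N * Sd Fq [b] N) := by ring
      _ = _ := by
          rw [ih, hchen, ← hab, ← hba]
          ring

end ProductN

section Final

open Filter FunctionField

variable {Fq : Type} [Field Fq] [Fintype Fq] [DecidableEq Fq] [DecidableEq (RatFunc Fq)]

lemma zeta_spec (n : ℕ) (hn : 0 < n) (rest : List ℕ) :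
    Filter.Tendsto (fun N => toInfty Fq (Slt Fq (n :: rest) N)) Filter.atTop
      (nhds (zetaA Fq (n :: rest))) := by
  obtain ⟨L, hHS, hT⟩ := hasSum_of_val_le (f := fun d => Sd Fq (n :: rest) d)
    (fun d => val_Sd_le n hn rest d)
  have hz : zetaA Fq (n :: rest) = L := hHS.tsum_eq
  rw [hz]
  have hfun : (fun N => toInfty Fq (Slt Fq (n :: rest) N))
      = fun N => toInfty Fq (∑ d ∈ Finset.range N, Sd Fq (n :: rest) d) := by
    funext N
    rw [Slt_partial _ _ (by simp)]
  rw [hfun]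
  exact hT

end Final

end ChenAux

/-- **Chen's formula.** For `a, b ∈ ℕ` (positive),
`ζ_A(a) ζ_A(b) = ζ_A(a,b) + ζ_A(b,a) + ζ_A(a+b) + ∑_{i+j=a+b, i,j≥1, (q-1)∣j} Δ^{i,j}_{a,b} ζ_A(i,j)`. -/
theorem chen_formula (Fq : Type) [Field Fq] [Fintype Fq] [DecidableEq (RatFunc Fq)]
    (p : ℕ) [Fact p.Prime] [CharP Fq p]
    (a b : ℕ) (ha : 0 < a) (hb : 0 < b) :
    zetaA Fq [a] * zetaA Fq [b] =
      zetaA Fq [a, b] + zetaA Fq [b, a] + zetaA Fq [a + b] +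
        ∑ j ∈ Finset.Ioo 0 (a + b),
          if (Fintype.card Fq - 1) ∣ j then
            ZMod.castHom (dvd_refl p) (RatFunc.CompletionAtInfty Fq) (Del p a b (a + b - j) j) *
              zetaA Fq [a + b - j, j]
          else 0 := by
  classical
  have hcast : ∀ x : ZMod p, toInfty Fq (ZMod.castHom (dvd_refl p) (RatFunc Fq) x)
      = ZMod.castHom (dvd_refl p) (RatFunc.CompletionAtInfty Fq) x := fun x =>
    RingHom.congr_fun (RingHom.ext_zmod
      ((toInfty Fq).comp (ZMod.castHom (dvd_refl p) (RatFunc Fq)))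
      (ZMod.castHom (dvd_refl p) (RatFunc.CompletionAtInfty Fq))) x
  have hlhs := (ChenAux.zeta_spec (Fq := Fq) a ha []).mul (ChenAux.zeta_spec (Fq := Fq) b hb [])
  have hrhs : Filter.Tendsto (fun N => toInfty Fq (Slt Fq [a, b] N)
      + toInfty Fq (Slt Fq [b, a] N) + toInfty Fq (Slt Fq [a + b] N)
      + ∑ j ∈ Finset.Ioo 0 (a + b), (if (Fintype.card Fq - 1) ∣ j then
          ZMod.castHom (dvd_refl p) (RatFunc.CompletionAtInfty Fq) (Del p a b (a + b - j) j)
            * toInfty Fq (Slt Fq [a + b - j, j] N) else 0))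
      Filter.atTop (nhds (zetaA Fq [a, b] + zetaA Fq [b, a] + zetaA Fq [a + b]
        + ∑ j ∈ Finset.Ioo 0 (a + b), (if (Fintype.card Fq - 1) ∣ j then
            ZMod.castHom (dvd_refl p) (RatFunc.CompletionAtInfty Fq) (Del p a b (a + b - j) j)
              * zetaA Fq [a + b - j, j] else 0))) := by
    refine Filter.Tendsto.add (Filter.Tendsto.add (Filter.Tendsto.add
      (ChenAux.zeta_spec a ha [b]) (ChenAux.zeta_spec b hb [a]))
      (ChenAux.zeta_spec (a + b) (by omega) [])) ?_
    refine tendsto_finset_sum _ fun j hj => ?_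
    by_cases hdvd : (Fintype.card Fq - 1) ∣ j
    · simp only [if_pos hdvd]
      simp only [Finset.mem_Ioo] at hj
      exact (ChenAux.zeta_spec (a + b - j) (by omega) [j]).const_mul _
    · simp only [if_neg hdvd]
      exact tendsto_const_nhds
  have heq : (fun N => toInfty Fq (Slt Fq [a] N) * toInfty Fq (Slt Fq [b] N))
      = (fun N => toInfty Fq (Slt Fq [a, b] N)
        + toInfty Fq (Slt Fq [b, a] N) + toInfty Fq (Slt Fq [a + b] N)
        + ∑ j ∈ Finset.Ioo 0 (a + b), (if (Fintype.card Fq - 1) ∣ j then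
            ZMod.castHom (dvd_refl p) (RatFunc.CompletionAtInfty Fq) (Del p a b (a + b - j) j)
              * toInfty Fq (Slt Fq [a + b - j, j] N) else 0)) := by
    funext N
    rw [← map_mul, ChenAux.slt_product p a b ha hb N, map_add, map_add, map_add, map_sum]
    congr 1
    refine Finset.sum_congr rfl fun j _ => ?_
    by_cases hdvd : (Fintype.card Fq - 1) ∣ j
    · rw [if_pos hdvd, if_pos hdvd, map_mul, hcast]
    · rw [if_neg hdvd, if_neg hdvd, map_zero]
  rw [heq] at hlhs
  exact tendsto_nhds_unique hlhs hrhs
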